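/- If a directed graph G ∈ Γ_{n,k} contains an edge e that is not contained in any directed cycle of G, then ∑_{H⊆G} α(H) = 0 (the sum over all subgraphs of G). -/

import Mathlib

open Finset

open scoped Classical Nat

noncomputable section

/-- A directed graph with `n` labeled vertices and `k` labeled edges:
the `ℓ`-th edge is the ordered pair `G ℓ = (a, b)` (an edge from `a` to `b`; loops allowed). -/
abbrev DG (n k : ℕ) := Fin k → Fin n × Fin n

namespace DG

variable {n k : ℕ}

/-- `step G S a b`: the subgraph of `G` with edge-label set `S` has an edge from `a` to `b`. -/
def step (G : DG n k) (S : Finset (Fin k)) (a b : Fin n) : Prop :=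
  ∃ e ∈ S, G e = (a, b)

/-- The subgraph of `G` with edge-label set `S` contains no directed cycle. -/
def Acyclic (G : DG n k) (S : Finset (Fin k)) : Prop :=
  ∀ a : Fin n, ¬ Relation.TransGen (step G S) a a

/-- The edge `e` lies on a directed cycle of the subgraph of `G` with edge set `S`
(equivalently, there is a directed path from the head of `e` back to its tail). -/
def OnCycle (G : DG n k) (S : Finset (Fin k)) (e : Fin k) : Prop :=
  Relation.ReflTransGen (step G S) (G e).2 (G e).1

/-- Strongly semiconnected: every edge lies on a directed cycle. -/
def SSC (G : DG n k) (S : Finset (Fin k)) : Prop :=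
  ∀ e ∈ S, OnCycle G S e

/-- Strongly connected: every ordered pair of vertices is joined by a directed path. -/
def StronglyConnected (G : DG n k) (S : Finset (Fin k)) : Prop :=
  ∀ a b : Fin n, Relation.ReflTransGen (step G S) a b

/-- Adjacency in the underlying undirected graph. -/
def adj (G : DG n k) (S : Finset (Fin k)) (a b : Fin n) : Prop :=
  ∃ e ∈ S, G e = (a, b) ∨ G e = (b, a)

/-- `β₀`: the number of connected components of the underlying undirected graph
(isolated vertices count as components). -/
def beta0 (G : DG n k) (S : Finset (Fin k)) : ℕ :=
  Nat.card (Quot (adj G S))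

/-- `α(H) = (−1)^{#edges}` if `H` is acyclic, `0` otherwise. -/
def alpha (G : DG n k) (S : Finset (Fin k)) : ℤ :=
  if Acyclic G S then (-1) ^ S.card else 0

/-- `σ(H) = (−1)^{β₁}` if `H` is strongly semiconnected, `0` otherwise;
here `β₁ = #edges − n + β₀`, and `(−1)^{#edges − n + β₀} = (−1)^{#edges + n + β₀}`. -/
def sigma (G : DG n k) (S : Finset (Fin k)) : ℤ :=
  if SSC G S then (-1) ^ (S.card + n + beta0 G S) else 0

/-- The vertex `v` is isolated: incident to no edge. -/
def isolated (G : DG n k) (v : Fin n) : Prop :=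
  ∀ e : Fin k, (G e).1 ≠ v ∧ (G e).2 ≠ v

/-- The vertex `v` is a sink: no edge starts at it. -/
def isSink (G : DG n k) (v : Fin n) : Prop :=
  ∀ e : Fin k, (G e).1 ≠ v

end DG


lemma trans_decomp {V : Type*} {r s : V → V → Prop} {a b : V}
    (h : Relation.TransGen (fun x y => r x y ∨ s x y) a b) :
    Relation.TransGen r a b ∨ ∃ c d, s c d ∧
      Relation.ReflTransGen (fun x y => r x y ∨ s x y) a c ∧
      Relation.ReflTransGen (fun x y => r x y ∨ s x y) d b := by
  induction h with
  | @single c h =>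
    rcases h with h | h
    · exact Or.inl (Relation.TransGen.single h)
    · exact Or.inr ⟨a, c, h, Relation.ReflTransGen.refl, Relation.ReflTransGen.refl⟩
  | @tail b c h₁ h₂ ih =>
    rcases ih with ih | ⟨p, q, hs, h1, h2⟩
    · rcases h₂ with h₂ | h₂
      · exact Or.inl (ih.tail h₂)
      · exact Or.inr ⟨b, c, h₂, h₁.to_reflTransGen, Relation.ReflTransGen.refl⟩
    · exact Or.inr ⟨p, q, hs, h1, h2.tail h₂⟩

lemma acyclic_mono {n k : ℕ} {G : DG n k} {S T : Finset (Fin k)} (hST : S ⊆ T)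
    (h : DG.Acyclic G T) : DG.Acyclic G S :=
  fun a ha => h a (Relation.TransGen.mono (fun _ _ ⟨f, hf, hGf⟩ => ⟨f, hST hf, hGf⟩) _ _ ha)

lemma acyclic_insert {n k : ℕ} {G : DG n k} {S : Finset (Fin k)} {e : Fin k}
    (he : ¬ Relation.ReflTransGen (DG.step G Finset.univ) (G e).2 (G e).1)
    (h : DG.Acyclic G S) : DG.Acyclic G (insert e S) := by
  intro a ha
  have hmono : ∀ x y : Fin n, (DG.step G S x y ∨ G e = (x, y)) → DG.step G Finset.univ x y := by
    rintro x y (⟨f, _, hGf⟩ | hGe)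
    · exact ⟨f, Finset.mem_univ f, hGf⟩
    · exact ⟨e, Finset.mem_univ e, hGe⟩
  have ha' : Relation.TransGen (fun x y => DG.step G S x y ∨ G e = (x, y)) a a := by
    refine Relation.TransGen.mono (fun x y hxy => ?_) _ _ ha
    obtain ⟨f, hf, hGf⟩ := hxy
    rcases Finset.mem_insert.1 hf with rfl | hf
    · exact Or.inr hGf
    · exact Or.inl ⟨f, hf, hGf⟩
  rcases trans_decomp ha' with h1 | ⟨c, d, hs, h1, h2⟩
  · exact h a h1
  · apply he
    have := (Relation.ReflTransGen.mono hmono _ _ h2).trans (Relation.ReflTransGen.mono hmono _ _ h1)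
    rw [hs]
    exact this

/-- If a directed graph `G ∈ Γ_{n,k}` contains an edge `e` that lies on no
directed cycle of `G` (equivalently, there is no directed path from the head of `e` back to
its tail), then `∑_{H⊆G} α(H) = 0`. -/
theorem sum_alpha_eq_zero (n k : ℕ) (hn : 1 ≤ n) (G : DG n k) (e : Fin k)
    (he : ¬ DG.OnCycle G Finset.univ e) :
    ∑ S : Finset (Fin k), DG.alpha G S = 0 := by
  have he' : ¬ Relation.ReflTransGen (DG.step G Finset.univ) (G e).2 (G e).1 := he
  have key : ∀ S : Finset (Fin k), e ∉ S →
      DG.alpha G (insert e S) = - DG.alpha G S := by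
    intro S hS
    unfold DG.alpha
    have hc : (insert e S).card = S.card + 1 := Finset.card_insert_of_notMem hS
    by_cases hA : DG.Acyclic G S
    · rw [if_pos (acyclic_insert he' hA), if_pos hA, hc, pow_succ]
      ring
    · rw [if_neg (fun h => hA (acyclic_mono (Finset.subset_insert e S) h)), if_neg hA]
      ring
  refine Finset.sum_ninvolution (fun S => if e ∈ S then S.erase e else insert e S)
    ?_ ?_ (fun S => Finset.mem_univ _) ?_
  · intro S
    by_cases hS : e ∈ S
    · simp only [if_pos hS]
      have h1 : insert e (S.erase e) = S := Finset.insert_erase hS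
      have := key (S.erase e) (Finset.notMem_erase e S)
      rw [h1] at this
      rw [this]; ring
    · simp only [if_neg hS]
      rw [key S hS]; ring
  · intro S _
    by_cases hS : e ∈ S
    · simp only [if_pos hS]
      intro h
      rw [← h] at hS
      exact Finset.notMem_erase e S hS
    · simp only [if_neg hS]
      intro h
      exact hS (h ▸ Finset.mem_insert_self e S)

  · intro S
    by_cases hS : e ∈ S
    · rw [if_pos hS, if_neg (Finset.notMem_erase e S), Finset.insert_erase hS]
    · rw [if_neg hS, if_pos (Finset.mem_insert_self e S), Finset.erase_insert hS]
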